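/- Let A ∈ ℂ^{n×n}, λ an eigenvalue, and let u₁,…,u_p and v₁,…,v_q be left and right Jordan chains for λ with p and q both even. Then u_i*v_j = 0 for all 1 ≤ i ≤ p/2 and 1 ≤ j ≤ q/2. -/

import Mathlib

open Matrix

/-- Corollary (even case): for `p`, `q` even, `uᵢ* vⱼ = 0` for
`1 ≤ i ≤ p/2`, `1 ≤ j ≤ q/2`. -/
theorem biorthogonality_even {n p q : ℕ}
    (A : Matrix (Fin n) (Fin n) ℂ) (lam : ℂ)
    (u v : ℕ → Fin n → ℂ)
    (hp : 1 ≤ p) (hq : 1 ≤ q) (hpe : Even p) (hqe : Even q)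
    (hu0 : u 1 ≠ 0) (hv0 : v 1 ≠ 0)
    (hu1 : Matrix.vecMul (star (u 1)) A = lam • star (u 1))
    (huS : ∀ i, 1 ≤ i → i + 1 ≤ p →
      Matrix.vecMul (star (u (i + 1))) A = lam • star (u (i + 1)) + star (u i))
    (hv1 : A.mulVec (v 1) = lam • v 1)
    (hvS : ∀ j, 1 ≤ j → j + 1 ≤ q →
      A.mulVec (v (j + 1)) = lam • v (j + 1) + v j) :
    ∀ i j, 1 ≤ i → 2 * i ≤ p → 1 ≤ j → 2 * j ≤ q →
      dotProduct (star (u i)) (v j) = 0 := by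
  -- f a b := ⟨u a, v b⟩
  set f : ℕ → ℕ → ℂ := fun a b => dotProduct (star (u a)) (v b) with hf
  -- exchange identity
  have key : ∀ a b, 1 ≤ a → a + 1 ≤ p → 1 ≤ b → b + 1 ≤ q →
      f a (b + 1) = f (a + 1) b := by
    intro a b ha hap hb hbq
    have hcalc : dotProduct (star (u (a+1))) (A.mulVec (v (b+1)))
        = dotProduct (Matrix.vecMul (star (u (a+1))) A) (v (b+1)) :=
      Matrix.dotProduct_mulVec _ _ _
    rw [hvS b hb hbq, huS a ha hap] at hcalc
    simp only [add_dotProduct, smul_dotProduct, dotProduct_add,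
      dotProduct_smul, smul_eq_mul] at hcalc
    have := hcalc
    simp only [hf]
    linear_combination -this
  -- boundary: f a 1 = 0 for a + 1 ≤ p
  have bu : ∀ a, 1 ≤ a → a + 1 ≤ p → f a 1 = 0 := by
    intro a ha hap
    have hcalc : dotProduct (star (u (a+1))) (A.mulVec (v 1))
        = dotProduct (Matrix.vecMul (star (u (a+1))) A) (v 1) :=
      Matrix.dotProduct_mulVec _ _ _
    rw [hv1, huS a ha hap] at hcalc
    simp only [add_dotProduct, smul_dotProduct,
      dotProduct_smul, smul_eq_mul] at hcalc
    simp only [hf]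
    linear_combination -hcalc
  -- boundary: f 1 b = 0 for b + 1 ≤ q
  have bv : ∀ b, 1 ≤ b → b + 1 ≤ q → f 1 b = 0 := by
    intro b hb hbq
    have hcalc : dotProduct (star (u 1)) (A.mulVec (v (b+1)))
        = dotProduct (Matrix.vecMul (star (u 1)) A) (v (b+1)) :=
      Matrix.dotProduct_mulVec _ _ _
    rw [hvS b hb hbq, hu1] at hcalc
    simp only [smul_dotProduct, dotProduct_add,
      dotProduct_smul, smul_eq_mul] at hcalc
    simp only [hf]
    linear_combination hcalc
  -- shift towards the left column: f (k+1) b = f 1 (b+k) when k+1 ≤ p, b+k ≤ q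
  have shiftL : ∀ k b, 1 ≤ b → k + 1 ≤ p → b + k ≤ q → f (k + 1) b = f 1 (b + k) := by
    intro k
    induction k with
    | zero => intro b _ _ _; simp
    | succ m ih =>
      intro b hb hkp hkq
      have h1 : f (m + 1) (b + 1) = f (m + 2) b :=
        key (m + 1) b (by omega) (by omega) hb (by omega)
      have h2 : f (m + 1) (b + 1) = f 1 (b + 1 + m) :=
        ih (b + 1) (by omega) (by omega) (by omega)
      have hbm : b + (m + 1) = b + 1 + m := by omega
      rw [hbm, ← h2, ← h1]
  -- shift towards the top row: f a (k+1) = f (a+k) 1 when k+1 ≤ q, a+k ≤ p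
  have shiftT : ∀ k a, 1 ≤ a → k + 1 ≤ q → a + k ≤ p → f a (k + 1) = f (a + k) 1 := by
    intro k
    induction k with
    | zero => intro a _ _ _; simp
    | succ m ih =>
      intro a ha hkq hkp
      have h1 : f a (m + 2) = f (a + 1) (m + 1) :=
        key a (m + 1) ha (by omega) (by omega) (by omega)
      have h2 : f (a + 1) (m + 1) = f (a + 1 + m) 1 :=
        ih (a + 1) (by omega) (by omega) (by omega)
      have ham : a + (m + 1) = a + 1 + m := by omega
      rw [ham, ← h2, ← h1]
  intro i j hi hip hj hjq
  show f i j = 0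
  rcases le_total p q with hpq | hpq
  · -- use left column: f i j = f 1 (j + (i-1)) and i + j - 1 ≤ q - 1
    obtain ⟨k, hk⟩ : ∃ k, i = k + 1 := ⟨i - 1, by omega⟩
    subst hk
    rw [shiftL k j hj (by omega) (by omega)]
    exact bv (j + k) (by omega) (by omega)
  · obtain ⟨k, hk⟩ : ∃ k, j = k + 1 := ⟨j - 1, by omega⟩
    subst hk
    rw [shiftT k i hi (by omega) (by omega)]
    exact bu (i + k) (by omega) (by omega)
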